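/- For the Laurent polynomial P(t) = 3t^2 + 2 + 3t^{-1} + 3t^{-2} over 𝔽₅, the constant term of P(t)^n is nonzero in 𝔽₅ for all n with 0 ≤ n < 25 = 5^2, but there exists some n with ct(P^n) = 0 in 𝔽₅. -/

import Mathlib

open LaurentPolynomial

noncomputable def P : LaurentPolynomial (ZMod 5) := 3 * T 2 + 2 + 3 * T (-1) + 3 * T (-2)

lemma P_eq : P = AddMonoidAlgebra.single 2 3 + AddMonoidAlgebra.single 0 2
    + AddMonoidAlgebra.single (-1) 3 + AddMonoidAlgebra.single (-2) 3 := by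
  have h3 : (3 : LaurentPolynomial (ZMod 5)) = C 3 := (map_ofNat C 3).symm
  have h2 : (2 : LaurentPolynomial (ZMod 5)) = C 2 := (map_ofNat C 2).symm
  have h2' : (C 2 : LaurentPolynomial (ZMod 5)) = AddMonoidAlgebra.single 0 2 := by
    rw [show (AddMonoidAlgebra.single 0 2 : LaurentPolynomial (ZMod 5)) = C 2 * T 0 from
      single_eq_C_mul_T 2 0, T_zero, mul_one]
  rw [P, h3, h2, ← single_eq_C_mul_T, ← single_eq_C_mul_T, ← single_eq_C_mul_T, h2']

lemma P_mul_apply (f : LaurentPolynomial (ZMod 5)) (k : ℤ) :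
    (P * f).coeff k = 3 * f.coeff (k - 2) + 2 * f.coeff k + 3 * f.coeff (k + 1) + 3 * f.coeff (k + 2) := by
  rw [P_eq, add_mul, add_mul, add_mul]
  rw [AddMonoidAlgebra.coeff_add, AddMonoidAlgebra.coeff_add, AddMonoidAlgebra.coeff_add]
  rw [Finsupp.add_apply, Finsupp.add_apply, Finsupp.add_apply]
  rw [AddMonoidAlgebra.coeff_single_mul_apply, AddMonoidAlgebra.coeff_single_mul_apply,
    AddMonoidAlgebra.coeff_single_mul_apply, AddMonoidAlgebra.coeff_single_mul_apply]
  norm_num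
  ring_nf

def stepL (l : List (ZMod 5)) : List (ZMod 5) :=
  (List.range (l.length + 4)).map fun j =>
    (if 4 ≤ j then 3 * l.getD (j - 4) 0 else 0) +
    (if 2 ≤ j then 2 * l.getD (j - 2) 0 else 0) +
    (if 1 ≤ j then 3 * l.getD (j - 1) 0 else 0) + 3 * l.getD j 0

def LL : ℕ → List (ZMod 5)
  | 0 => [1]
  | n + 1 => stepL (LL n)

lemma getD_zero_of_le (l : List (ZMod 5)) {j : ℕ} (h : l.length ≤ j) : l.getD j 0 = 0 :=
  List.getD_eq_default l 0 h

lemma stepL_getD (l : List (ZMod 5)) (j : ℕ) :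
    (stepL l).getD j 0 =
    (if 4 ≤ j then 3 * l.getD (j - 4) 0 else 0) +
    (if 2 ≤ j then 2 * l.getD (j - 2) 0 else 0) +
    (if 1 ≤ j then 3 * l.getD (j - 1) 0 else 0) + 3 * l.getD j 0 := by
  by_cases h : j < l.length + 4
  · rw [List.getD_eq_getElem?_getD, stepL]
    rw [List.getElem?_eq_getElem (by simpa using h)]
    simp
  · push_neg at h
    rw [getD_zero_of_le _ (by simp [stepL]; omega)]
    rw [getD_zero_of_le l (by omega), getD_zero_of_le l (by omega),
      getD_zero_of_le l (by omega), getD_zero_of_le l (by omega)]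
    simp

lemma stepL_length (l : List (ZMod 5)) : (stepL l).length = l.length + 4 := by simp [stepL]

lemma bridge : ∀ (n : ℕ) (k : ℤ), (P ^ n).coeff k =
    if 0 ≤ k + 2 * n then (LL n).getD (k + 2 * n).toNat 0 else 0 := by
  intro n
  induction n with
  | zero =>
    intro k
    rw [pow_zero, show (1 : LaurentPolynomial (ZMod 5)) = AddMonoidAlgebra.single 0 1 from rfl,
      AddMonoidAlgebra.coeff_single, Finsupp.single_apply]
    simp only [Nat.cast_zero, mul_zero, add_zero, LL]
    rcases lt_trichotomy k 0 with h | h | h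
    · rw [if_neg (by omega), if_neg (by omega)]
    · subst h; simp
    · rw [if_neg (by omega), if_pos (by omega),
        getD_zero_of_le _ (by simp; omega)]
  | succ n ih =>
    intro k
    rw [pow_succ', P_mul_apply, ih, ih, ih, ih]
    push_cast
    by_cases h : 0 ≤ k + 2 * ((n : ℤ) + 1)
    · rw [if_pos h]
      set j := (k + 2 * ((n : ℤ) + 1)).toNat with hj
      rw [show LL (n + 1) = stepL (LL n) from rfl, stepL_getD]
      have t1 : (if 0 ≤ k - 2 + 2 * (n : ℤ) then (LL n).getD (k - 2 + 2 * (n : ℤ)).toNat 0 else 0)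
          = (if 4 ≤ j then (LL n).getD (j - 4) 0 else 0) := by
        split_ifs with h1 h2
        · congr 1; omega
        · omega
        · omega
        · rfl
      have t2 : (if 0 ≤ k + 2 * (n : ℤ) then (LL n).getD (k + 2 * (n : ℤ)).toNat 0 else 0)
          = (if 2 ≤ j then (LL n).getD (j - 2) 0 else 0) := by
        split_ifs with h1 h2
        · congr 1; omega
        · omega
        · omega
        · rfl
      have t3 : (if 0 ≤ k + 1 + 2 * (n : ℤ) then (LL n).getD (k + 1 + 2 * (n : ℤ)).toNat 0 else 0)
          = (if 1 ≤ j then (LL n).getD (j - 1) 0 else 0) := by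
        split_ifs with h1 h2
        · congr 1; omega
        · omega
        · omega
        · rfl
      have t4 : (if 0 ≤ k + 2 + 2 * (n : ℤ) then (LL n).getD (k + 2 + 2 * (n : ℤ)).toNat 0 else 0)
          = (LL n).getD j 0 := by
        rw [if_pos (by omega)]; congr 1; omega
      rw [t1, t2, t3, t4]
      simp only [mul_ite, mul_zero]
    · rw [if_neg h, if_neg (by omega), if_neg (by omega), if_neg (by omega), if_neg (by omega)]
      ring

lemma ct_eq (n : ℕ) : (P ^ n).coeff 0 = (LL n).getD (2 * n) 0 := by
  rw [bridge, if_pos (by positivity)]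
  congr 1
  omega

set_option maxRecDepth 10000 in
theorem stmt10 :
    (∀ n : ℕ, n < 5 ^ 2 → (P ^ n).coeff 0 ≠ 0) ∧ ∃ n : ℕ, (P ^ n).coeff 0 = 0 := by
  constructor
  · have h : ∀ n : ℕ, n < 25 → (LL n).getD (2 * n) 0 ≠ 0 := by decide
    intro n hn
    rw [ct_eq]
    exact h n (by norm_num at hn; exact hn)
  · exact ⟨43, by rw [ct_eq]; decide⟩
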